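/- Let F be a family of finite graphs such that every graph H in F (with its shortest-path metric) admits an embedding into L1 with distortion at most α ≥ 1. Let G be a finite graph that admits a stochastic β-embedding into F for some β ≥ 1. Then the shortest-path metric of G admits an embedding into L1 with distortion at most α·β. -/

import Mathlib

open Finset

instance : Fact ((1 : ENNReal) ≤ 1) := ⟨le_rfl⟩

/-- `embedsL1 G D`: the shortest-path metric of the graph `G` admits an embedding
into an `L1` space (`ℝ^N` with the `ℓ1` norm, for some finite `N`) with
distortion at most `D`: there is an injective map `f` and a scale `s > 0` with
`s·d(x,y) ≤ ‖f x − f y‖₁ ≤ D·s·d(x,y)` for all vertices `x, y`. -/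
def embedsL1 {V : Type*} [Fintype V] (G : SimpleGraph V) (D : ℝ) : Prop :=
  ∃ (N : ℕ) (f : V → PiLp 1 (fun _ : Fin N => ℝ)) (s : ℝ),
    0 < s ∧ Function.Injective f ∧
      ∀ x y : V,
        s * (G.dist x y : ℝ) ≤ dist (f x) (f y) ∧
          dist (f x) (f y) ≤ D * (s * (G.dist x y : ℝ))

private lemma aux_div1 {ps d : ℝ} (s : ℝ) (hs : s ≠ 0) : ps / s * (s * d) = ps * d := by
  field_simp

private lemma aux_sigma {m : ℕ} (n : Fin m → ℕ) {M : Type*} [AddCommMonoid M]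
    (h : ((k : Fin m) × Fin (n k)) → M) :
    ∑ σ : (k : Fin m) × Fin (n k), h σ = ∑ k, ∑ a, h ⟨k, a⟩ := by
  rw [← Finset.univ_sigma_univ, Finset.sum_sigma]

private lemma aux_div2 {ps d a : ℝ} (s : ℝ) (hs : s ≠ 0) :
    ps / s * (a * (s * d)) = a * (ps * d) := by
  field_simp

/-- if every graph `H i` of a family (each carrying its shortest-path
metric) embeds into `L1` with distortion at most `α ≥ 1`, and the connected graph `G`
admits a stochastic `β`-embedding into the family (`β ≥ 1`), i.e. a finitely
supported distribution `p` over indices `idx k` together with non-contracting maps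
`f k : V(G) → V(H (idx k))` such that `E[d(f x, f y)] ≤ β·d_G(x,y)`, then `G`
embeds into `L1` with distortion at most `α·β`. -/
theorem embedsL1_of_stochastic_embedding
    {ι : Type*} (Vfam : ι → Type*) [∀ i, Fintype (Vfam i)]
    (H : ∀ i, SimpleGraph (Vfam i)) (hHconn : ∀ i, (H i).Connected)
    (α : ℝ) (hα : 1 ≤ α) (hemb : ∀ i, embedsL1 (H i) α)
    {V : Type*} [Fintype V] (G : SimpleGraph V) (hGconn : G.Connected)
    (β : ℝ) (hβ : 1 ≤ β)
    (m : ℕ) (hm : 0 < m)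
    (p : Fin m → ℝ) (hp : ∀ k, 0 ≤ p k) (hps : ∑ k, p k = 1)
    (idx : Fin m → ι) (f : ∀ k, V → Vfam (idx k))
    (hnoncontract : ∀ k x y, (G.dist x y : ℝ) ≤ ((H (idx k)).dist (f k x) (f k y) : ℝ))
    (hexpand : ∀ x y, ∑ k, p k * ((H (idx k)).dist (f k x) (f k y) : ℝ) ≤ β * (G.dist x y : ℝ)) :
    embedsL1 G (α * β) := by
  classical
  choose N g s hspos hginj hgbd using fun k => hemb (idx k)
  let e : ((k : Fin m) × Fin (N k)) ≃ Fin (Fintype.card ((k : Fin m) × Fin (N k))) := Fintype.equivFin _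
  set F : V → PiLp 1 (fun _ : Fin (Fintype.card ((k : Fin m) × Fin (N k))) => ℝ) :=
    fun x => WithLp.toLp 1 (fun j => (p (e.symm j).1 / s (e.symm j).1) *
      (g (e.symm j).1 (f (e.symm j).1 x) (e.symm j).2)) with hF
  have key : ∀ x y : V,
      dist (F x) (F y) = ∑ k, (p k / s k) * dist (g k (f k x)) (g k (f k y)) := by
    intro x y
    rw [PiLp.dist_eq_sum (by norm_num : (0:ℝ) < (1 : ENNReal).toReal)]
    simp only [ENNReal.toReal_one, Real.rpow_one, one_div, inv_one]
    rw [← Equiv.sum_comp e (fun j => dist (F x j) (F y j))]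
    rw [aux_sigma N]
    refine Finset.sum_congr rfl fun k _ => ?_
    rw [PiLp.dist_eq_sum (by norm_num : (0:ℝ) < (1 : ENNReal).toReal)]
    simp only [ENNReal.toReal_one, one_div, inv_one, Real.rpow_one, Finset.mul_sum]
    refine Finset.sum_congr rfl fun a _ => ?_
    simp only [hF, Equiv.symm_apply_apply, WithLp.ofLp_toLp]
    rw [Real.dist_eq, Real.dist_eq, ← mul_sub, abs_mul,
      abs_of_nonneg (div_nonneg (hp k) (hspos k).le)]
    rw [e.symm_apply_apply ⟨k, a⟩]
  have lower : ∀ x y : V, (G.dist x y : ℝ) ≤ dist (F x) (F y) := by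
    intro x y
    rw [key x y]
    calc (G.dist x y : ℝ) = ∑ k, p k * (G.dist x y : ℝ) := by
          rw [← Finset.sum_mul, hps, one_mul]
      _ ≤ ∑ k, (p k / s k) * dist (g k (f k x)) (g k (f k y)) := by
          refine Finset.sum_le_sum fun k _ => ?_
          calc p k * (G.dist x y : ℝ)
              ≤ p k * ((H (idx k)).dist (f k x) (f k y) : ℝ) :=
                mul_le_mul_of_nonneg_left (hnoncontract k x y) (hp k)
            _ = (p k / s k) * (s k * ((H (idx k)).dist (f k x) (f k y) : ℝ)) :=
                (aux_div1 _ (hspos k).ne').symm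
            _ ≤ (p k / s k) * dist (g k (f k x)) (g k (f k y)) :=
                mul_le_mul_of_nonneg_left (hgbd k (f k x) (f k y)).1
                  (div_nonneg (hp k) (hspos k).le)
  refine ⟨Fintype.card ((k : Fin m) × Fin (N k)), F, 1, one_pos, ?_, ?_⟩
  · intro x y hxy
    by_contra hne
    have h1 : (1:ℝ) ≤ (G.dist x y : ℝ) := by
      exact_mod_cast hGconn.pos_dist_of_ne hne
    have h2 := lower x y
    rw [hxy, dist_self] at h2
    linarith
  · intro x y
    refine ⟨by simpa using lower x y, ?_⟩
    rw [key x y]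
    have hα0 : (0:ℝ) ≤ α := le_trans zero_le_one hα
    calc ∑ k, (p k / s k) * dist (g k (f k x)) (g k (f k y))
        ≤ ∑ k, α * (p k * ((H (idx k)).dist (f k x) (f k y) : ℝ)) := by
          refine Finset.sum_le_sum fun k _ => ?_
          calc (p k / s k) * dist (g k (f k x)) (g k (f k y))
              ≤ (p k / s k) * (α * (s k * ((H (idx k)).dist (f k x) (f k y) : ℝ))) :=
                mul_le_mul_of_nonneg_left (hgbd k (f k x) (f k y)).2
                  (div_nonneg (hp k) (hspos k).le)
            _ = α * (p k * ((H (idx k)).dist (f k x) (f k y) : ℝ)) :=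
                aux_div2 _ (hspos k).ne'
      _ = α * ∑ k, p k * ((H (idx k)).dist (f k x) (f k y) : ℝ) := by
          rw [Finset.mul_sum]
      _ ≤ α * (β * (G.dist x y : ℝ)) :=
          mul_le_mul_of_nonneg_left (hexpand x y) hα0
      _ = α * β * (1 * (G.dist x y : ℝ)) := by ring
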